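/- Fix n ≥ 1 and real constants k. On the open set U = { (x,p) ∈ ℝⁿ × ℝⁿ : x_i ≠ 0 for all i }, define h₁(x,p) = (1/2) Σᵢ x_i², h₂(x,p) = −(1/2) Σᵢ x_i p_i, and h₃(x,p) = (1/2) Σᵢ ( p_i² + k / x_i² ). Then, with respect to the canonical Poisson bracket, the identities {h₁,h₃} = −2 h₂, {h₁,h₂} = −h₁, and {h₂,h₃} = −h₃ hold at every point of U. In particular h₁, h₂, h₃ span a Lie algebra isomorphic to sl(2,ℝ). -/

import Mathlib

open scoped BigOperators

/-- The canonical Poisson bracket of two functions on `ℝⁿ × ℝⁿ` (coordinates `(x, p)`):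
`{f,g} = ∑ i, (∂f/∂xᵢ · ∂g/∂pᵢ − ∂f/∂pᵢ · ∂g/∂xᵢ)`. -/
noncomputable def canonicalPoissonBracket (n : ℕ)
    (f g : (Fin n → ℝ) × (Fin n → ℝ) → ℝ)
    (z : (Fin n → ℝ) × (Fin n → ℝ)) : ℝ :=
  ∑ i : Fin n,
    (fderiv ℝ f z (Pi.single i 1, 0) * fderiv ℝ g z (0, Pi.single i 1) -
      fderiv ℝ f z (0, Pi.single i 1) * fderiv ℝ g z (Pi.single i 1, 0))

section aux
variable {n : ℕ}

noncomputable def Xc (i : Fin n) : ((Fin n → ℝ) × (Fin n → ℝ)) →L[ℝ] ℝ :=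
  (ContinuousLinearMap.proj i).comp (ContinuousLinearMap.fst ℝ (Fin n → ℝ) (Fin n → ℝ))

noncomputable def Pc (i : Fin n) : ((Fin n → ℝ) × (Fin n → ℝ)) →L[ℝ] ℝ :=
  (ContinuousLinearMap.proj i).comp (ContinuousLinearMap.snd ℝ (Fin n → ℝ) (Fin n → ℝ))

@[simp] lemma Xc_apply (i : Fin n) (v : (Fin n → ℝ) × (Fin n → ℝ)) : Xc i v = v.1 i := rfl
@[simp] lemma Pc_apply (i : Fin n) (v : (Fin n → ℝ) × (Fin n → ℝ)) : Pc i v = v.2 i := rfl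

lemma hX (z : (Fin n → ℝ) × (Fin n → ℝ)) (i : Fin n) :
    HasFDerivAt (fun w : (Fin n → ℝ) × (Fin n → ℝ) => w.1 i) (Xc i) z :=
  (Xc i).hasFDerivAt

lemma hP (z : (Fin n → ℝ) × (Fin n → ℝ)) (i : Fin n) :
    HasFDerivAt (fun w : (Fin n → ℝ) × (Fin n → ℝ) => w.2 i) (Pc i) z :=
  (Pc i).hasFDerivAt

end aux

/-- The Hamiltonian functions `h₁, h₂, h₃` of the Smorodinsky–Winternitz oscillator
satisfy `{h₁,h₃} = −2h₂`, `{h₁,h₂} = −h₁`, `{h₂,h₃} = −h₃` on the open set where all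
`xᵢ ≠ 0`, so they span a Lie algebra isomorphic to `sl(2,ℝ)`. -/
theorem smorodinsky_winternitz_hamiltonians_sl2 (n : ℕ) (hn : 1 ≤ n) (k : ℝ)
    (h₁ h₂ h₃ : (Fin n → ℝ) × (Fin n → ℝ) → ℝ)
    (hh₁ : ∀ z, h₁ z = (1 / 2) * ∑ i : Fin n, (z.1 i) ^ 2)
    (hh₂ : ∀ z, h₂ z = -((1 / 2) * ∑ i : Fin n, z.1 i * z.2 i))
    (hh₃ : ∀ z, h₃ z = (1 / 2) * ∑ i : Fin n, ((z.2 i) ^ 2 + k / (z.1 i) ^ 2))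
    (z : (Fin n → ℝ) × (Fin n → ℝ)) (hz : ∀ i, z.1 i ≠ 0) :
    canonicalPoissonBracket n h₁ h₃ z = -2 * h₂ z ∧
    canonicalPoissonBracket n h₁ h₂ z = -h₁ z ∧
    canonicalPoissonBracket n h₂ h₃ z = -h₃ z := by
  have e1 : h₁ = fun z => (1/2 : ℝ) * ∑ i : Fin n, (z.1 i)^2 := funext hh₁
  have e2 : h₂ = fun z => -((1/2 : ℝ) * ∑ i : Fin n, z.1 i * z.2 i) := funext hh₂
  have e3 : h₃ = fun z => (1/2 : ℝ) * ∑ i : Fin n, ((z.2 i)^2 + k / (z.1 i)^2) := funext hh₃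
  have d1 : HasFDerivAt h₁
      ((1/2 : ℝ) • ∑ i : Fin n, ((2:ℕ) * z.1 i ^ 1) • Xc i) z := by
    rw [e1]
    exact (HasFDerivAt.fun_sum fun i _ =>
      (hasDerivAt_pow 2 (z.1 i)).comp_hasFDerivAt z (hX z i)).const_mul (1/2 : ℝ)
  have d2 : HasFDerivAt h₂
      (-((1/2 : ℝ) • ∑ i : Fin n, (z.1 i • Pc i + z.2 i • Xc i))) z := by
    rw [e2]
    exact ((HasFDerivAt.fun_sum fun i _ => (hX z i).mul (hP z i)).const_mul (1/2 : ℝ)).neg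
  have d3 : HasFDerivAt h₃
      ((1/2 : ℝ) • ∑ i : Fin n,
        (((2:ℕ) * z.2 i ^ 1) • Pc i +
          ((0 * z.1 i ^ 2 - k * ((2:ℕ) * z.1 i ^ 1)) / (z.1 i ^ 2)^2) • Xc i)) z := by
    rw [e3]
    exact (HasFDerivAt.fun_sum fun i _ =>
      ((hasDerivAt_pow 2 (z.2 i)).comp_hasFDerivAt z (hP z i)).add
        (((hasDerivAt_const (z.1 i) k).div (hasDerivAt_pow 2 (z.1 i))
          (pow_ne_zero 2 (hz i))).comp_hasFDerivAt z (hX z i))).const_mul (1/2 : ℝ)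
  have F1 := d1.fderiv
  have F2 := d2.fderiv
  have F3 := d3.fderiv
  refine ⟨?_, ?_, ?_⟩
  · simp only [canonicalPoissonBracket, F1, F2, F3, hh₁ z, hh₂ z, hh₃ z,
      ContinuousLinearMap.smul_apply, ContinuousLinearMap.sum_apply,
      ContinuousLinearMap.add_apply, ContinuousLinearMap.sub_apply,
      ContinuousLinearMap.neg_apply, ContinuousLinearMap.zero_apply,
      ContinuousLinearMap.coe_smul', Pi.smul_apply, smul_eq_mul,
      Xc_apply, Pc_apply, Pi.single_apply, Pi.zero_apply, mul_zero, mul_one,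
      mul_ite, Finset.sum_ite_eq', Finset.mem_univ, if_true, add_zero, zero_add,
      zero_mul, sub_zero, pow_one, Nat.cast_ofNat, Finset.sum_const_zero]
    rw [neg_mul_neg, ← mul_assoc]
    norm_num
    exact Finset.sum_congr rfl fun i _ => by ring
  · simp only [canonicalPoissonBracket, F1, F2, F3, hh₁ z, hh₂ z, hh₃ z,
      ContinuousLinearMap.smul_apply, ContinuousLinearMap.sum_apply,
      ContinuousLinearMap.add_apply, ContinuousLinearMap.sub_apply,
      ContinuousLinearMap.neg_apply, ContinuousLinearMap.zero_apply,
      ContinuousLinearMap.coe_smul', Pi.smul_apply, smul_eq_mul,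
      Xc_apply, Pc_apply, Pi.single_apply, Pi.zero_apply, mul_zero, mul_one,
      mul_ite, Finset.sum_ite_eq', Finset.mem_univ, if_true, add_zero, zero_add,
      zero_mul, sub_zero, pow_one, Nat.cast_ofNat, Finset.sum_const_zero]
    rw [Finset.mul_sum, ← Finset.sum_neg_distrib]
    exact Finset.sum_congr rfl fun i _ => by ring
  · simp only [canonicalPoissonBracket, F1, F2, F3, hh₁ z, hh₂ z, hh₃ z,
      ContinuousLinearMap.smul_apply, ContinuousLinearMap.sum_apply,
      ContinuousLinearMap.add_apply, ContinuousLinearMap.sub_apply,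
      ContinuousLinearMap.neg_apply, ContinuousLinearMap.zero_apply,
      ContinuousLinearMap.coe_smul', Pi.smul_apply, smul_eq_mul,
      Xc_apply, Pc_apply, Pi.single_apply, Pi.zero_apply, mul_zero, mul_one,
      mul_ite, Finset.sum_ite_eq', Finset.mem_univ, if_true, add_zero, zero_add,
      zero_mul, sub_zero, pow_one, Nat.cast_ofNat, Finset.sum_const_zero]
    rw [Finset.mul_sum, ← Finset.sum_neg_distrib]
    refine Finset.sum_congr rfl fun i _ => ?_
    have h := hz i
    field_simp
    ring
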